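/- (Variance of the deformed Heine variable) Let $0<q<1$, $\lambda>0$, and let $X$ follow the Heine distribution with probability function $f_X^H(x)= \frac{q^{\binom{x}{2}}\lambda^x}{[x]_q!}\prod_{i=1}^{\infty}(1+\lambda(1-q)q^{i-1})^{-1}$, $x=0,1,2,\ldots$. Then the variance of the deformed random variable $[X]_{1/q}$ is $V\big([X]_{1/q}\big)=\sum_{x=0}^{\infty}\big([x]_{1/q}-\lambda\big)^2 f_X^H(x) = \frac{1-q}{q}\,\lambda^2 + \lambda$. -/

import Mathlib

open scoped BigOperators

/-- The `q`-factorial `[n]_q! = ∏_{k=1}^n (1-q^k)/(1-q)`. -/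
noncomputable def qFact (q : ℝ) (n : ℕ) : ℝ :=
  ∏ k ∈ Finset.range n, (1 - q ^ (k + 1)) / (1 - q)

/-- The deformed value `[x]_{1/q} = (q^{-x}-1)/(q^{-1}-1)`. -/
noncomputable def qDef (q : ℝ) (x : ℕ) : ℝ := (q⁻¹ ^ x - 1) / (q⁻¹ - 1)

set_option linter.unusedSectionVars false

noncomputable def hw (q t : ℝ) (x : ℕ) : ℝ := q ^ (x * (x - 1) / 2) * t ^ x / qFact q x

lemma tri_succ (x : ℕ) : (x + 1) * ((x + 1) - 1) / 2 = x * (x - 1) / 2 + x := by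
  cases x with
  | zero => rfl
  | succ y =>
    obtain ⟨k, hk⟩ := Nat.even_mul_succ_self y
    simp only [Nat.add_sub_cancel]
    have e1 : (y + 1 + 1) * (y + 1) = y * (y + 1) + 2 * (y + 1) := by ring
    have e2 : (y + 1) * y = y * (y + 1) := Nat.mul_comm _ _
    omega

section
variable {q lam t : ℝ} (hq0 : 0 < q) (hq1 : q < 1)
include hq0 hq1

lemma qFact_pos (n : ℕ) : 0 < qFact q n := by
  apply Finset.prod_pos
  intro k _
  have h1 : q ^ (k + 1) < 1 := pow_lt_one₀ hq0.le hq1 (by omega)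
  have h2 : (0:ℝ) < 1 - q := by linarith
  have h3 : (0:ℝ) < 1 - q ^ (k+1) := by linarith
  positivity

lemma hw_zero : hw q t 0 = 1 := by simp [hw, qFact]

lemma hw_pos (ht : 0 < t) (x : ℕ) : 0 < hw q t x := by
  have := qFact_pos hq0 hq1 (q := q) x
  unfold hw; positivity

lemma hw_succ (x : ℕ) :
    hw q t (x + 1) = hw q t x * (q ^ x * t * (1 - q) / (1 - q ^ (x + 1))) := by
  have h1 : (0:ℝ) < 1 - q ^ (x + 1) := by
    have : q ^ (x+1) < 1 := pow_lt_one₀ hq0.le hq1 (by omega); linarith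
  have h2 := qFact_pos hq0 hq1 (q := q) x
  have h3 : (0:ℝ) < 1 - q := by linarith
  unfold hw
  rw [tri_succ, qFact, Finset.prod_range_succ, ← qFact, pow_add, pow_succ]
  field_simp

lemma qDef_zero : qDef q 0 = 0 := by simp [qDef]

lemma qDef_nonneg (x : ℕ) : 0 ≤ qDef q x := by
  have h1 : (1:ℝ) < q⁻¹ := one_lt_inv₀ hq0 |>.2 hq1
  have h2 : (1:ℝ) ≤ q⁻¹ ^ x := one_le_pow₀ h1.le
  have : (0:ℝ) < q⁻¹ - 1 := by linarith
  apply div_nonneg <;> linarith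

lemma qDef_succ (x : ℕ) : qDef q (x + 1) = 1 + q⁻¹ * qDef q x := by
  have h1 : (1:ℝ) < q⁻¹ := one_lt_inv₀ hq0 |>.2 hq1
  unfold qDef
  generalize q⁻¹ = p at h1 ⊢
  have h2 : p - 1 ≠ 0 := by linarith
  field_simp
  ring

lemma qDef_succ' (x : ℕ) : qDef q (x + 1) = (1 - q ^ (x + 1)) / (q ^ x * (1 - q)) := by
  have h1 : q ≠ 0 := hq0.ne'
  have h2 : (1:ℝ) < q⁻¹ := one_lt_inv₀ hq0 |>.2 hq1
  have h3 : q⁻¹ - 1 ≠ 0 := by linarith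
  have h4 : (1:ℝ) - q ≠ 0 := by linarith
  unfold qDef
  rw [div_eq_div_iff h3 (by positivity)]
  have e : q⁻¹ ^ (x + 1) = (q ^ (x+1))⁻¹ := by rw [inv_pow]
  rw [e]
  field_simp
  ring

-- key recurrence R1
lemma R1 (x : ℕ) : qDef q (x + 1) * hw q lam (x + 1) = lam * hw q lam x := by
  have h1 : (0:ℝ) < 1 - q ^ (x + 1) := by
    have : q ^ (x+1) < 1 := pow_lt_one₀ hq0.le hq1 (by omega); linarith
  have h3 : (0:ℝ) < 1 - q := by linarith
  have hqx : (0:ℝ) < q ^ x := pow_pos hq0 x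
  rw [qDef_succ' hq0 hq1, hw_succ hq0 hq1]
  field_simp

end

section
variable {q lam t s : ℝ} (hq0 : 0 < q) (hq1 : q < 1)
include hq0 hq1

lemma hw_scale (x : ℕ) : hw q (q * t) x = q ^ x * hw q t x := by
  unfold hw; rw [mul_pow]; ring

lemma hw_succ_le (ht : 0 < t) (x : ℕ) :
    hw q t (x + 1) ≤ hw q t x * (q ^ x * t) := by
  have h1 : (0:ℝ) < 1 - q ^ (x + 1) := by
    have : q ^ (x+1) < 1 := pow_lt_one₀ hq0.le hq1 (by omega); linarith
  have h2 : q ^ (x + 1) ≤ q := by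
    calc q ^ (x+1) ≤ q ^ 1 := pow_le_pow_of_le_one hq0.le hq1.le (by omega)
    _ = q := pow_one q
  have h3 : (1 - q) / (1 - q ^ (x + 1)) ≤ 1 := by
    rw [div_le_one h1]; linarith
  have h4 : 0 < hw q t x := hw_pos hq0 hq1 ht x
  rw [hw_succ hq0 hq1]
  have e : hw q t x * (q ^ x * t * (1 - q) / (1 - q ^ (x + 1)))
      = (hw q t x * (q ^ x * t)) * ((1 - q) / (1 - q ^ (x + 1))) := by ring
  rw [e]
  have h5 : 0 < hw q t x * (q ^ x * t) := by positivity
  nlinarith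

lemma u_ratio (ht : 0 < t) (x : ℕ) :
    (qDef q (x+1) + 1) ^ 2 * hw q t (x+1)
      ≤ (4 * t / q ^ 2 * q ^ x) * ((qDef q x + 1) ^ 2 * hw q t x) := by
  have hd : 0 ≤ qDef q x := qDef_nonneg hq0 hq1 x
  have hqi : (1:ℝ) ≤ q⁻¹ := (one_lt_inv₀ hq0 |>.2 hq1).le
  have hqi0 : (0:ℝ) < q⁻¹ := by positivity
  have h1 : qDef q (x+1) + 1 ≤ 2 * q⁻¹ * (qDef q x + 1) := by
    rw [qDef_succ hq0 hq1]
    nlinarith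
  have h1n : 0 ≤ qDef q (x+1) + 1 := by
    have := qDef_nonneg hq0 hq1 (x+1); linarith
  have h2 : (qDef q (x+1) + 1) ^ 2 ≤ (2 * q⁻¹ * (qDef q x + 1)) ^ 2 := by
    apply pow_le_pow_left₀ h1n h1 2
  have h3 := hw_succ_le hq0 hq1 ht x
  have h4 : 0 ≤ hw q t (x+1) := (hw_pos hq0 hq1 ht (x+1)).le
  have h5 : 0 ≤ hw q t x := (hw_pos hq0 hq1 ht x).le
  calc (qDef q (x+1) + 1) ^ 2 * hw q t (x+1)
      ≤ (2 * q⁻¹ * (qDef q x + 1)) ^ 2 * (hw q t x * (q ^ x * t)) := by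
        apply mul_le_mul h2 h3 h4 (by positivity)
    _ = (4 * t / q ^ 2 * q ^ x) * ((qDef q x + 1) ^ 2 * hw q t x) := by
        have hq : q ≠ 0 := hq0.ne'
        field_simp
        ring
  
lemma u_summable (ht : 0 < t) :
    Summable (fun x => (qDef q x + 1) ^ 2 * hw q t x) := by
  apply summable_of_ratio_norm_eventually_le (r := 1/2) (by norm_num)
  have hlim : Filter.Tendsto (fun x : ℕ => 4 * t / q ^ 2 * q ^ x) Filter.atTop (nhds 0) := by
    simpa using (tendsto_pow_atTop_nhds_zero_of_lt_one hq0.le hq1).const_mul (4 * t / q ^ 2)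
  have hev : ∀ᶠ x : ℕ in Filter.atTop, 4 * t / q ^ 2 * q ^ x ≤ 1/2 :=
    hlim.eventually (ge_mem_nhds (by norm_num : (0:ℝ) < 1/2))
  filter_upwards [hev] with x hx
  have hu1 : 0 ≤ (qDef q (x+1) + 1) ^ 2 * hw q t (x+1) := by
    have := (hw_pos hq0 hq1 ht (x+1)).le; positivity
  have hu0 : 0 ≤ (qDef q x + 1) ^ 2 * hw q t x := by
    have := (hw_pos hq0 hq1 ht x).le; positivity
  rw [Real.norm_eq_abs, Real.norm_eq_abs, abs_of_nonneg hu1, abs_of_nonneg hu0]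
  calc (qDef q (x+1) + 1) ^ 2 * hw q t (x+1)
      ≤ (4 * t / q ^ 2 * q ^ x) * ((qDef q x + 1) ^ 2 * hw q t x) := u_ratio hq0 hq1 ht x
    _ ≤ 1/2 * ((qDef q x + 1) ^ 2 * hw q t x) := by
        apply mul_le_mul_of_nonneg_right hx hu0

lemma summable_hw (ht : 0 < t) : Summable (hw q t) := by
  apply (u_summable hq0 hq1 ht).of_nonneg_of_le
  · intro x; exact (hw_pos hq0 hq1 ht x).le
  · intro x
    have hd := qDef_nonneg hq0 hq1 x
    have hw' := (hw_pos hq0 hq1 ht x).le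
    nlinarith [mul_nonneg (mul_nonneg hd hd) hw', mul_nonneg hd hw', hw']

lemma summable_d_hw (ht : 0 < t) : Summable (fun x => qDef q x * hw q t x) := by
  apply (u_summable hq0 hq1 ht).of_nonneg_of_le
  · intro x
    exact mul_nonneg (qDef_nonneg hq0 hq1 x) (hw_pos hq0 hq1 ht x).le
  · intro x
    have hd := qDef_nonneg hq0 hq1 x
    have hw' := (hw_pos hq0 hq1 ht x).le
    nlinarith [mul_nonneg (mul_nonneg hd hd) hw', mul_nonneg hd hw', hw']

lemma summable_d2_hw (ht : 0 < t) : Summable (fun x => qDef q x ^ 2 * hw q t x) := by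
  apply (u_summable hq0 hq1 ht).of_nonneg_of_le
  · intro x
    have := (hw_pos hq0 hq1 ht x).le
    have := qDef_nonneg hq0 hq1 x
    positivity
  · intro x
    have hd := qDef_nonneg hq0 hq1 x
    have hw' := (hw_pos hq0 hq1 ht x).le
    nlinarith [mul_nonneg (mul_nonneg hd hd) hw', mul_nonneg hd hw', hw']

end

section
open Filter Finset
variable {q lam t s : ℝ} (hq0 : 0 < q) (hq1 : q < 1)
include hq0 hq1

lemma hw_diff (ht : 0 < t) (x : ℕ) :
    hw q t (x+1) - hw q (q*t) (x+1) = t * (1-q) * hw q (q*t) x := by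
  have h1 : (0:ℝ) < 1 - q ^ (x + 1) := by
    have : q ^ (x+1) < 1 := pow_lt_one₀ hq0.le hq1 (by omega); linarith
  rw [hw_scale hq0 hq1, hw_scale hq0 hq1, hw_succ hq0 hq1]
  field_simp

lemma Efun (ht : 0 < t) :
    ∑' x, hw q t x = (1 + t * (1-q)) * ∑' x, hw q (q*t) x := by
  have hqt : 0 < q * t := mul_pos hq0 ht
  have S1 : Summable (hw q t) := summable_hw hq0 hq1 ht
  have S2 : Summable (hw q (q*t)) := summable_hw hq0 hq1 hqt
  have Sd : Summable (fun x => hw q t x - hw q (q*t) x) := S1.sub S2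
  have h0 : hw q t 0 - hw q (q*t) 0 = 0 := by
    rw [hw_zero hq0 hq1, hw_zero hq0 hq1]; ring
  have key : ∑' x, (hw q t x - hw q (q*t) x) = t * (1-q) * ∑' x, hw q (q*t) x := by
    rw [Sd.tsum_eq_zero_add, h0, zero_add]
    rw [← tsum_mul_left]
    exact tsum_congr fun x => hw_diff hq0 hq1 ht x
  have := S1.tsum_sub S2
  rw [this] at key
  linarith [key]

lemma Eiter (hlam : 0 < lam) (N : ℕ) :
    ∑' x, hw q lam x =
      (∏ i ∈ Finset.range N, (1 + lam * (1-q) * q ^ i)) * ∑' x, hw q (q ^ N * lam) x := by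
  induction N with
  | zero => simp
  | succ n ih =>
    have ht : 0 < q ^ n * lam := by positivity
    have h := Efun hq0 hq1 ht
    have harg : q * (q ^ n * lam) = q ^ (n+1) * lam := by ring
    rw [harg] at h
    rw [ih, h, Finset.prod_range_succ]
    ring

lemma E_tail (ht : 0 < t) : ∑' x, hw q t (x + 1) = (∑' x, hw q t x) - 1 := by
  have S := summable_hw hq0 hq1 ht
  rw [S.tsum_eq_zero_add, hw_zero hq0 hq1]
  ring

lemma E_ge_one (ht : 0 < t) : 1 ≤ ∑' x, hw q t x := by
  have S := summable_hw hq0 hq1 ht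
  have h := E_tail hq0 hq1 ht
  have : 0 ≤ ∑' x, hw q t (x+1) :=
    tsum_nonneg fun x => (hw_pos hq0 hq1 ht (x+1)).le
  linarith

lemma hw_ratio (ht : 0 < t) (x : ℕ) : hw q s x = (s/t) ^ x * hw q t x := by
  unfold hw
  rw [div_pow]
  have h2 := (qFact_pos hq0 hq1 (q := q) x).ne'
  field_simp

lemma E_upper (hs : 0 < s) (hst : s ≤ t) :
    ∑' x, hw q s x ≤ 1 + (s/t) * ((∑' x, hw q t x) - 1) := by
  have ht : 0 < t := lt_of_lt_of_le hs hst
  have hr0 : 0 ≤ s / t := by positivity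
  have hr1 : s / t ≤ 1 := div_le_one_of_le₀ hst ht.le
  have Ss : Summable (fun x => hw q s (x+1)) :=
    (summable_nat_add_iff 1).2 (summable_hw hq0 hq1 hs)
  have St : Summable (fun x => (s/t) * hw q t (x+1)) :=
    ((summable_nat_add_iff 1).2 (summable_hw hq0 hq1 ht)).mul_left _
  have hterm : ∀ x : ℕ, hw q s (x+1) ≤ (s/t) * hw q t (x+1) := by
    intro x
    rw [hw_ratio hq0 hq1 ht (s := s) (x+1)]
    have hwp := (hw_pos hq0 hq1 ht (x+1)).le
    have hpow : (s/t) ^ (x+1) ≤ (s/t) ^ 1 := pow_le_pow_of_le_one hr0 hr1 (by omega)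
    rw [pow_one] at hpow
    exact mul_le_mul_of_nonneg_right hpow hwp
  have := Summable.tsum_le_tsum hterm Ss St
  rw [E_tail hq0 hq1 hs] at this
  rw [tsum_mul_left, E_tail hq0 hq1 ht] at this
  linarith

lemma heine_multipliable (hc : 0 < lam) :
    Multipliable (fun i : ℕ => 1 + lam * (1-q) * q ^ i) := by
  have hc' : 0 < lam * (1-q) := mul_pos hc (by linarith)
  apply Real.multipliable_of_summable_log (fun i => by positivity)
  apply Summable.of_nonneg_of_le (fun i => ?_) (fun i => ?_)
    ((summable_geometric_of_lt_one hq0.le hq1).mul_left (lam * (1-q)))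
  · apply Real.log_nonneg
    have : 0 ≤ lam * (1-q) * q ^ i := by positivity
    linarith
  · have h := Real.log_le_sub_one_of_pos
      (show (0:ℝ) < 1 + lam * (1-q) * q ^ i by positivity)
    linarith

lemma euler (hlam : 0 < lam) :
    ∑' x, hw q lam x = ∏' i : ℕ, (1 + lam * (1-q) * q ^ i) := by
  have hm := heine_multipliable hq0 hq1 hlam
  have hP : Tendsto (fun N => ∏ i ∈ Finset.range N, (1 + lam * (1-q) * q ^ i)) atTop
      (nhds (∏' i : ℕ, (1 + lam * (1-q) * q ^ i))) := hm.hasProd.tendsto_prod_nat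
  have hupper : Tendsto (fun N : ℕ => 1 + q ^ N * ((∑' x, hw q lam x) - 1)) atTop (nhds 1) := by
    have h1 : Tendsto (fun N : ℕ => q ^ N * ((∑' x, hw q lam x) - 1)) atTop (nhds 0) := by
      simpa using (tendsto_pow_atTop_nhds_zero_of_lt_one hq0.le hq1).mul_const
        ((∑' x, hw q lam x) - 1)
    simpa using h1.const_add 1
  have hE1 : Tendsto (fun N : ℕ => ∑' x, hw q (q ^ N * lam) x) atTop (nhds 1) := by
    apply tendsto_of_tendsto_of_tendsto_of_le_of_le tendsto_const_nhds hupper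
    · intro N
      exact E_ge_one hq0 hq1 (by positivity)
    · intro N
      have ht : 0 < q ^ N * lam := by positivity
      have hle : q ^ N * lam ≤ lam := by
        nlinarith [pow_le_one₀ hq0.le hq1.le (n := N)]
      have h := E_upper hq0 hq1 ht hle
      have he : q ^ N * lam / lam = q ^ N := by field_simp
      rw [he] at h
      exact h
  have hmain : Tendsto
      (fun N => (∏ i ∈ Finset.range N, (1 + lam * (1-q) * q ^ i)) * ∑' x, hw q (q ^ N * lam) x)
      atTop (nhds ((∏' i : ℕ, (1 + lam * (1-q) * q ^ i)) * 1)) := hP.mul hE1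
  have heq : (fun N => (∏ i ∈ Finset.range N, (1 + lam * (1-q) * q ^ i)) *
      ∑' x, hw q (q ^ N * lam) x) = fun _ => ∑' x, hw q lam x :=
    funext fun N => (Eiter hq0 hq1 hlam N).symm
  rw [heq] at hmain
  have := tendsto_nhds_unique hmain tendsto_const_nhds
  rw [mul_one] at this
  exact this.symm

end

/-- **Variance of the deformed Heine variable**:
`V([X]_{1/q}) = (1-q)/q · λ² + λ`. -/
theorem heine_deformed_variance (q lam : ℝ) (hq0 : 0 < q) (hq1 : q < 1) (hlam : 0 < lam) :
    ∑' x : ℕ,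
      (qDef q x - lam) ^ 2 * (q ^ (x * (x - 1) / 2) * lam ^ x / qFact q x *
        (∏' i : ℕ, (1 + lam * (1 - q) * q ^ i))⁻¹) = (1 - q) / q * lam ^ 2 + lam := by
  set H := ∏' i : ℕ, (1 + lam * (1 - q) * q ^ i) with hH
  have Sw : Summable (hw q lam) := summable_hw hq0 hq1 hlam
  have Sdw : Summable (fun x => qDef q x * hw q lam x) := summable_d_hw hq0 hq1 hlam
  have Sd2w : Summable (fun x => qDef q x ^ 2 * hw q lam x) := summable_d2_hw hq0 hq1 hlam
  set T0 := ∑' x, hw q lam x with hT0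
  -- first moment
  have T1 : ∑' x, qDef q x * hw q lam x = lam * T0 := by
    rw [Sdw.tsum_eq_zero_add, qDef_zero hq0 hq1, zero_mul, zero_add]
    rw [show (fun x => qDef q (x+1) * hw q lam (x+1)) = fun x => lam * hw q lam x from
      funext fun x => R1 hq0 hq1 x]
    rw [tsum_mul_left]
  -- second moment
  have T2 : ∑' x, qDef q x ^ 2 * hw q lam x = lam * T0 + lam ^ 2 * q⁻¹ * T0 := by
    rw [Sd2w.tsum_eq_zero_add, qDef_zero hq0 hq1]
    have hterm : ∀ x, qDef q (x+1) ^ 2 * hw q lam (x+1)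
        = lam * hw q lam x + (lam * q⁻¹) * (qDef q x * hw q lam x) := by
      intro x
      have h1 : qDef q (x+1) ^ 2 * hw q lam (x+1)
          = qDef q (x+1) * (qDef q (x+1) * hw q lam (x+1)) := by ring
      rw [h1, R1 hq0 hq1 x, qDef_succ hq0 hq1 x]
      ring
    rw [show (fun x => qDef q (x+1) ^ 2 * hw q lam (x+1))
        = fun x => lam * hw q lam x + (lam * q⁻¹) * (qDef q x * hw q lam x) from
      funext hterm]
    rw [Summable.tsum_add (Sw.mul_left _) (Sdw.mul_left _), tsum_mul_left, tsum_mul_left, T1]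
    ring
  -- variance sum
  have V : ∑' x, (qDef q x - lam) ^ 2 * hw q lam x = (lam + lam ^ 2 * (q⁻¹ - 1)) * T0 := by
    have expand : (fun x => (qDef q x - lam) ^ 2 * hw q lam x)
        = fun x => (qDef q x ^ 2 * hw q lam x - (2*lam) * (qDef q x * hw q lam x))
            + lam ^ 2 * hw q lam x := funext fun x => by ring
    rw [expand, Summable.tsum_add (Sd2w.sub (Sdw.mul_left _)) (Sw.mul_left _),
      Summable.tsum_sub Sd2w (Sdw.mul_left _), tsum_mul_left, tsum_mul_left, T1, T2]
    ring
  have hEuler : T0 = H := euler hq0 hq1 hlam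
  have hT0pos : (1:ℝ) ≤ T0 := E_ge_one hq0 hq1 hlam
  have hHne : H ≠ 0 := by rw [← hEuler]; linarith
  have hstep : ∀ x : ℕ, (qDef q x - lam) ^ 2 * (q ^ (x * (x - 1) / 2) * lam ^ x / qFact q x
      * H⁻¹) = ((qDef q x - lam) ^ 2 * hw q lam x) * H⁻¹ := by
    intro x; rw [hw]; ring
  rw [tsum_congr hstep, tsum_mul_right, V, hEuler]
  field_simp
  ring
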